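/- For every scalar sequence c with M^c ≠ ∅, the series ∑_{i=1}^∞ c_i·f_i converges in H, where f_i := (1/t_i)·e_{σ(i)} if i is the smallest index in its σ-fiber (i.e. σ(i') < σ(i) for all i' < i) and f_i := 0 otherwise. -/

import Mathlib

noncomputable section

open Set

/-- `M^c` for the repetition system `g i f = t i * ⟪f, e (σ i)⟫`. -/
def MSetH {H : Type*} [NormedAddCommGroup H] [InnerProductSpace ℝ H]
    (e : ℕ → H) (σ : ℕ → ℕ) (t : ℕ → ℝ) (c : ℕ → ℝ) : Set H :=
  {f | ∀ i, |c i| ≤ |t i * (inner ℝ f (e (σ i)) : ℝ)|}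

/-- `Θ̃`: scalar sequences with `M^c ≠ ∅`. -/
def ThetaTH {H : Type*} [NormedAddCommGroup H] [InnerProductSpace ℝ H]
    (e : ℕ → H) (σ : ℕ → ℕ) (t : ℕ → ℝ) : Set (ℕ → ℝ) :=
  {c | (MSetH e σ t c).Nonempty}

/-- `N(c) = inf{‖f‖ : f ∈ M^c}`. -/
def NNH {H : Type*} [NormedAddCommGroup H] [InnerProductSpace ℝ H]
    (e : ℕ → H) (σ : ℕ → ℕ) (t : ℕ → ℝ) (c : ℕ → ℝ) : ℝ :=
  sInf ((fun f => ‖f‖) '' MSetH e σ t c)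

open Classical in
/-- The reconstruction sequence: `f i = (1/t i) • e (σ i)` if `i` is the smallest
index in its `σ`-fiber, and `f i = 0` otherwise. -/
def fvec {H : Type*} [NormedAddCommGroup H] [InnerProductSpace ℝ H]
    (e : ℕ → H) (σ : ℕ → ℕ) (t : ℕ → ℝ) : ℕ → H :=
  fun i => if ∀ i' < i, σ i' < σ i then (t i)⁻¹ • e (σ i) else 0

theorem series_converges_on_thetaT
    {H : Type*} [NormedAddCommGroup H] [InnerProductSpace ℝ H] [CompleteSpace H]
    (e : HilbertBasis ℕ ℝ H) (σ : ℕ → ℕ) (t : ℕ → ℝ)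
    (hσmono : Monotone σ) (hσsurj : Function.Surjective σ)
    (hσtend : Filter.Tendsto σ Filter.atTop Filter.atTop)
    (ht : ∀ i, t i ≠ 0) :
    ∀ c : ℕ → ℝ, (MSetH e σ t c).Nonempty →
      ∃ L : H, Filter.Tendsto
        (fun n => ∑ i ∈ Finset.range n, c i • fvec (⇑e) σ t i)
        Filter.atTop (nhds L) := by
  intro c ⟨f, hf⟩
  -- ι j = smallest preimage of j under σ
  set ι : ℕ → ℕ := fun j => Nat.find (hσsurj j) with hι
  have hσι : ∀ j, σ (ι j) = j := fun j => Nat.find_spec (hσsurj j)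
  have hιinj : Function.Injective ι := by
    intro a b hab
    have := hσι a; rw [hab, hσι b] at this; exact this.symm
  -- coefficients
  set a : ℕ → ℝ := fun j => c (ι j) * (t (ι j))⁻¹ with ha
  have hbound : ∀ j, |a j| ≤ |(e.repr f) j| := by
    intro j
    have h1 : |c (ι j)| ≤ |t (ι j) * (inner ℝ f (e (σ (ι j))) : ℝ)| := hf (ι j)
    rw [hσι j] at h1
    have hrepr : (e.repr f) j = (inner ℝ f (e j) : ℝ) := by
      rw [e.repr_apply_apply, real_inner_comm]
    show |c (ι j) * (t (ι j))⁻¹| ≤ _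
    rw [hrepr, abs_mul, abs_inv]
    rw [abs_mul] at h1
    have htpos : 0 < |t (ι j)| := abs_pos.mpr (ht (ι j))
    calc |c (ι j)| * |t (ι j)|⁻¹ ≤ (|t (ι j)| * |(inner ℝ f (e j) : ℝ)|) * |t (ι j)|⁻¹ := by
          exact mul_le_mul_of_nonneg_right h1 (by positivity)
      _ = |(inner ℝ f (e j) : ℝ)| := by field_simp
  -- a is ℓ²
  have hrepr2 : Summable fun j => ‖(e.repr f) j‖ ^ (2 : ℝ) := by
    have := (lp.memℓp (e.repr f))
    rw [memℓp_gen_iff (by norm_num : (0:ℝ) < (2 : ENNReal).toReal)] at this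
    simpa using this
  have ha2 : Memℓp a 2 := by
    rw [memℓp_gen_iff (by norm_num : (0:ℝ) < (2 : ENNReal).toReal)]
    simp only [ENNReal.toReal_ofNat]
    refine Summable.of_nonneg_of_le (fun j => by positivity) (fun j => ?_)
      (by simpa using hrepr2)
    have := hbound j
    have h0 : (0:ℝ) ≤ |a j| := abs_nonneg _
    calc ‖a j‖ ^ (2:ℝ) = |a j| ^ (2:ℝ) := by rw [Real.norm_eq_abs]
      _ ≤ |(e.repr f) j| ^ (2:ℝ) :=
          Real.rpow_le_rpow h0 (hbound j) (by norm_num)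
      _ = ‖(e.repr f) j‖ ^ (2:ℝ) := by rw [Real.norm_eq_abs]
      _ ≤ _ := by
          rw [show ((2:ℝ)) = ((2:ℕ):ℝ) by norm_num, Real.rpow_natCast]
          simp [Real.norm_eq_abs, sq_abs]
  -- the series ∑ a j • e j converges
  have hsum : Summable fun j => a j • (e j : H) := by
    have := (e.hasSum_repr_symm (⟨a, ha2⟩ : lp (fun _ : ℕ => ℝ) 2)).summable
    exact this
  -- transfer along ι
  have hcomp : (fun i => c i • fvec (⇑e) σ t i) ∘ ι = fun j => a j • (e j : H) := by
    funext j
    have hmin : ∀ i' < ι j, σ i' < σ (ι j) := by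
      intro i' hi'
      have hne : σ i' ≠ j := Nat.find_min (hσsurj j) hi'
      have hle : σ i' ≤ σ (ι j) := hσmono (le_of_lt hi')
      rw [hσι j] at hle ⊢
      exact lt_of_le_of_ne hle hne
    have hfv : fvec (⇑e) σ t (ι j) = (t (ι j))⁻¹ • e (σ (ι j)) := by
      simp only [fvec]; exact if_pos hmin
    show c (ι j) • fvec (⇑e) σ t (ι j) = a j • e j
    rw [hfv, hσι j, smul_smul]
  have hvanish : ∀ i, i ∉ Set.range ι → c i • fvec (⇑e) σ t i = 0 := by
    intro i hi
    have hne : ι (σ i) ≠ i := fun h => hi ⟨σ i, h⟩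
    have hle : ι (σ i) ≤ i := Nat.find_min' (hσsurj (σ i)) rfl
    have hlt : ι (σ i) < i := lt_of_le_of_ne hle hne
    have : ¬ ∀ i' < i, σ i' < σ i := by
      push_neg
      exact ⟨ι (σ i), hlt, le_of_eq (hσι (σ i)).symm⟩
    simp [fvec, if_neg this]
  have hsum' : Summable fun i => c i • fvec (⇑e) σ t i := by
    rw [← hιinj.summable_iff hvanish]
    rw [hcomp]
    exact hsum
  exact ⟨_, hsum'.hasSum.tendsto_sum_nat⟩
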